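/- Let G be a connected claw-free (k+l+1)-regular graph with l ≤ k, and let H = G[N[L]] be an L-configuration of G. Then for each vertex u ∈ L, V(H) ⊆ P^∞({u}), i.e., the single vertex u monitors all of H under k-power domination propagation. -/

import Mathlib

open SimpleGraph

/-- Closed neighborhood of a set of vertices: `N[S]`. -/
def closedNbhd {V : Type*} (G : SimpleGraph V) (S : Set V) : Set V :=
  S ∪ {v | ∃ u ∈ S, G.Adj u v}

/-- The monitored sets `P^i(S)` of the k-power domination process:
`P^0(S) = N[S]`, `P^{i+1}(S) = ⋃ {N[v] : v ∈ P^i(S), |N[v] \ P^i(S)| ≤ k}`. -/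
def monitored {V : Type*} (G : SimpleGraph V) (k : ℕ) (S : Set V) : ℕ → Set V
  | 0 => closedNbhd G S
  | i + 1 => {w | ∃ v ∈ monitored G k S i,
      (closedNbhd G {v} \ monitored G k S i).ncard ≤ k ∧ w ∈ closedNbhd G {v}}

/-- `P^∞(S)`, realized as `P^{|V|}(S)` on a finite vertex type. -/
def monitoredInf {V : Type*} (G : SimpleGraph V) (k : ℕ) (S : Set V) : Set V :=
  monitored G k S (Nat.card V)

/-- `S` is a k-power dominating set. -/
def IsKPDS {V : Type*} (G : SimpleGraph V) (k : ℕ) (S : Set V) : Prop :=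
  monitoredInf G k S = Set.univ

/-- The k-power domination number `γ_{p,k}(G)`. -/
noncomputable def powerDomNumber {V : Type*} (G : SimpleGraph V) (k : ℕ) : ℕ :=
  sInf {m | ∃ S : Set V, S.Finite ∧ S.ncard = m ∧ IsKPDS G k S}

/-- A k-fort: a nonempty set `F` such that every vertex of `N(F) \ F`
has at least `k+1` neighbors in `F`. -/
def IsKFort {V : Type*} (G : SimpleGraph V) (k : ℕ) (F : Set V) : Prop :=
  F.Nonempty ∧ ∀ v ∈ closedNbhd G F \ F, k + 1 ≤ (G.neighborSet v ∩ F).ncard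

/-- Claw-free: no induced `K_{1,3}`. -/
def ClawFree {V : Type*} (G : SimpleGraph V) : Prop :=
  ∀ u a b c : V, G.Adj u a → G.Adj u b → G.Adj u c → a ≠ b → a ≠ c → b ≠ c →
    G.Adj a b ∨ G.Adj a c ∨ G.Adj b c

/-- `r`-regular. -/
def RegularOfDegree {V : Type*} (G : SimpleGraph V) (r : ℕ) : Prop :=
  ∀ v : V, (G.neighborSet v).ncard = r

/-- The domination number `γ(G)`. -/
noncomputable def domNumber {V : Type*} (G : SimpleGraph V) : ℕ :=
  sInf {m | ∃ S : Set V, S.Finite ∧ S.ncard = m ∧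
    ∀ v : V, v ∈ S ∨ ∃ u ∈ S, G.Adj v u}

/-- The total domination number `γ_t(G)`. -/
noncomputable def totalDomNumber {V : Type*} (G : SimpleGraph V) : ℕ :=
  sInf {m | ∃ S : Set V, S.Finite ∧ S.ncard = m ∧ ∀ v : V, ∃ u ∈ S, G.Adj v u}

theorem Lconfig_monitored_by_single_vertex {V : Type*} [Finite V] (G : SimpleGraph V)
    (k l : ℕ) (hl : l ≤ k) (hconn : G.Connected) (hcf : ClawFree G)
    (hreg : RegularOfDegree G (k + l + 1))
    (L : Set V) (hLclique : G.IsClique L) (hLfort : IsKFort G k L)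
    (u : V) (hu : u ∈ L) :
    closedNbhd G L ⊆ monitoredInf G k {u} := by
  classical
  have hLfin : L.Finite := Set.toFinite L
  -- L is contained in N[u]
  have hNuL : L ⊆ closedNbhd G {u} := by
    intro v hv
    by_cases hvu : v = u
    · exact Or.inl (by simp [hvu])
    · exact Or.inr ⟨u, rfl, hLclique hu hv (Ne.symm hvu)⟩
  -- N[v] ⊆ N[L] for v ∈ L
  have hsub : ∀ v ∈ L, closedNbhd G {v} ⊆ closedNbhd G L := by
    intro v hv w hw
    rcases hw with hw | ⟨x, hx, hadj⟩
    · exact Or.inl (hw ▸ hv)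
    · rcases hx with rfl
      exact Or.inr ⟨x, hv, hadj⟩
  -- every vertex of N[L] is in N[v] for some v ∈ L
  have hcover : ∀ w ∈ closedNbhd G L, ∃ v ∈ L, w ∈ closedNbhd G {v} := by
    intro w hw
    rcases hw with hw | ⟨x, hx, hadj⟩
    · exact ⟨w, hw, Or.inl rfl⟩
    · exact ⟨x, hx, Or.inr ⟨x, rfl, hadj⟩⟩
  -- monotone step once all of N[L] is monitored
  have hmono : ∀ i, closedNbhd G L ⊆ monitored G k {u} i →
      closedNbhd G L ⊆ monitored G k {u} (i+1) := by
    intro i hi w hw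
    obtain ⟨v, hv, hwv⟩ := hcover w hw
    refine ⟨v, hi (hsub v hv (Or.inl rfl)), ?_, hwv⟩
    have hemp : closedNbhd G {v} \ monitored G k {u} i = ∅ :=
      Set.diff_eq_empty.mpr (fun x hx => hi (hsub v hv hx))
    simp [hemp]
  -- key: N[L] ⊆ P^1({u})
  have key : closedNbhd G L ⊆ monitored G k {u} 1 := by
    by_cases hcase : L.ncard ≤ k + 1
    · -- small L: every external vertex is adjacent to all of L, so N[L] ⊆ N[u]
      have h0 : closedNbhd G L ⊆ monitored G k {u} 0 := by
        intro w hw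
        by_cases hwL : w ∈ L
        · exact hNuL hwL
        · have hfort := hLfort.2 w ⟨hw, hwL⟩
          have heq : G.neighborSet w ∩ L = L :=
            Set.eq_of_subset_of_ncard_le Set.inter_subset_right
              (le_trans hcase hfort) hLfin
          have huw : u ∈ G.neighborSet w := (heq.symm ▸ hu : u ∈ G.neighborSet w ∩ L).1
          exact Or.inr ⟨u, rfl, (huw : G.Adj w u).symm⟩
      exact hmono 0 h0
    · -- large L: each v ∈ L has at most l ≤ k neighbors outside L
      push_neg at hcase
      intro w hw
      obtain ⟨v, hv, hwv⟩ := hcover w hw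
      refine ⟨v, hNuL hv, ?_, hwv⟩
      have hdiffsub : closedNbhd G {v} \ monitored G k {u} 0 ⊆ G.neighborSet v \ L := by
        rintro x ⟨hx1, hx2⟩
        refine ⟨?_, fun hxL => hx2 (hNuL hxL)⟩
        rcases hx1 with hx1 | ⟨y, hy, hadj⟩
        · exact absurd (hNuL (hx1 ▸ hv)) (hx1 ▸ hx2)
        · rcases hy with rfl
          exact hadj
      have hdisj : Disjoint (G.neighborSet v \ L) (L \ {v}) :=
        Set.disjoint_left.mpr (fun x hx hx' => hx.2 hx'.1)
      have hNvL : G.neighborSet v = (G.neighborSet v \ L) ∪ (L \ {v}) := by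
        ext x
        constructor
        · intro hx
          by_cases hxL : x ∈ L
          · exact Or.inr ⟨hxL, fun h => G.loopless.irrefl v (by
              have : x = v := h
              exact this ▸ hx)⟩
          · exact Or.inl ⟨hx, hxL⟩
        · rintro (⟨hx, _⟩ | ⟨hxL, hxv⟩)
          · exact hx
          · exact hLclique hv hxL (fun h => hxv h.symm)
      have hcard : (G.neighborSet v \ L).ncard + (L \ {v}).ncard = k + l + 1 := by
        have h := hreg v
        rw [hNvL, Set.ncard_union_eq hdisj (Set.toFinite _) (Set.toFinite _)] at h
        exact h
      have hLv : (L \ {v}).ncard = L.ncard - 1 :=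
        Set.ncard_diff_singleton_of_mem hv
      have hbound : (G.neighborSet v \ L).ncard ≤ k := by omega
      calc (closedNbhd G {v} \ monitored G k {u} 0).ncard
          ≤ (G.neighborSet v \ L).ncard :=
            Set.ncard_le_ncard hdiffsub (Set.toFinite _)
        _ ≤ k := hbound
  -- propagate to all steps ≥ 1
  have hall : ∀ i, closedNbhd G L ⊆ monitored G k {u} (i+1) := by
    intro i
    induction i with
    | zero => exact key
    | succ j ih => exact hmono (j+1) ih
  have : Nonempty V := ⟨u⟩
  have hpos : 1 ≤ Nat.card V := Nat.card_pos
  obtain ⟨m, hm⟩ : ∃ m, Nat.card V = m + 1 := ⟨Nat.card V - 1, by omega⟩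
  rw [monitoredInf, hm]
  exact hall m
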